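/- Let (X, K) be a generalized Stone space. Let {U_i : i ∈ I} and {V_j : j ∈ J} be nonempty families of elements of D_K(X) such that ⋂{U_i : i ∈ I} ⊆ ⋃{V_j : j ∈ J}. Then there exist finitely many indices i_1, …, i_n ∈ I and j_1, …, j_k ∈ J such that U_{i_1} ∩ … ∩ U_{i_n} ⊆ V_{j_1} ∪ … ∪ V_{j_k}. -/

import Mathlib

open Set TopologicalSpace

/-- A family of sets is downward-directed if any two members contain a common member. -/
def DirDown {X : Type*} (F : Set (Set X)) : Prop :=
  ∀ U ∈ F, ∀ V ∈ F, ∃ W ∈ F, W ⊆ U ∩ V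

/-- A family of sets is upward-directed if any two members are contained in a common member. -/
def DirUp {X : Type*} (F : Set (Set X)) : Prop :=
  ∀ U ∈ F, ∀ V ∈ F, ∃ W ∈ F, U ∪ V ⊆ W

/-- `(X, K)` is a generalized Stone space. -/
structure IsGenStone {X : Type*} [TopologicalSpace X] (K : Set (Set X)) : Prop where
  sep : ∀ x y : X, x ≠ y → ∃ U ∈ K, x ∈ U ∧ y ∉ U
  basis : IsTopologicalBasis K
  compact : ∀ U ∈ K, IsCompact U
  diff_mem : ∀ A ∈ K, ∀ B ∈ K, A ∩ Bᶜ ∈ K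
  union_mem : ∀ A ∈ K, ∀ B ∈ K, A ∪ B ∈ K
  dir_inter : ∀ Y : Set X, IsClosed Y → ∀ I ⊆ K, I.Nonempty → DirDown I →
    (∀ U ∈ I, (Y ∩ U).Nonempty) → (Y ∩ ⋂₀ I).Nonempty

/-- The dual family `D_K(X)` of sets whose complement lies in `K`. -/
def DK {X : Type*} (K : Set (Set X)) : Set (Set X) := {U | Uᶜ ∈ K}

/-- `(X, K, R)` is a generalized modal space. -/
structure IsGenModal {X : Type*} [TopologicalSpace X] (K : Set (Set X))
    (R : X → X → Prop) : Prop where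
  toIsGenStone : IsGenStone K
  closed_succ : ∀ x : X, IsClosed {y | R x y}
  box_mem : ∀ U ∈ DK K, {x : X | ∀ y, R x y → y ∈ U} ∈ DK K

/-- Lemma (pseudo-compactness): if the intersection of a nonempty family of elements of
`D_K(X)` is contained in the union of a nonempty family of elements of `D_K(X)`, then some
finite subintersection is contained in some finite subunion. -/
theorem stmt0 {X : Type*} [TopologicalSpace X] {K : Set (Set X)} (hX : IsGenStone K)
    {I J : Type*} [Nonempty I] [Nonempty J] (U : I → Set X) (V : J → Set X)
    (hU : ∀ i, U i ∈ DK K) (hV : ∀ j, V j ∈ DK K)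
    (hsub : (⋂ i, U i) ⊆ ⋃ j, V j) :
    ∃ (s : Finset I) (t : Finset J), s.Nonempty ∧ t.Nonempty ∧
      (⋂ i ∈ s, U i) ⊆ ⋃ j ∈ t, V j := by
  classical
  have hKopen : ∀ A ∈ K, IsOpen A := fun A hA => hX.basis.isOpen hA
  have hKinter : ∀ A ∈ K, ∀ B ∈ K, A ∩ B ∈ K := by
    intro A hA B hB
    have h := hX.diff_mem A hA (A ∩ Bᶜ) (hX.diff_mem A hA B hB)
    have heq : A ∩ (A ∩ Bᶜ)ᶜ = A ∩ B := by ext x; simp; tauto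
    rwa [heq] at h
  have hfin : ∀ t : Finset J, t.Nonempty → (⋂ j ∈ t, (V j)ᶜ) ∈ K := by
    intro t ht
    induction t using Finset.induction_on with
    | empty => exact absurd ht (by simp)
    | insert a t ha ih =>
      rcases t.eq_empty_or_nonempty with rfl | hne
      · simpa [DK] using hV a
      · rw [Finset.set_biInter_insert]
        exact hKinter _ (hV a) _ (ih hne)
  set Y := ⋂ i, U i with hYdef
  have hYclosed : IsClosed Y := by
    apply isClosed_iInter
    intro i
    have := (hKopen _ (hU i)).isClosed_compl
    simpa using this
  set I' : Set (Set X) := {W | ∃ t : Finset J, t.Nonempty ∧ W = ⋂ j ∈ t, (V j)ᶜ} with hI'def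
  have hI'K : I' ⊆ K := by
    rintro W ⟨t, ht, rfl⟩
    exact hfin t ht
  have hI'ne : I'.Nonempty := by
    obtain ⟨j⟩ := ‹Nonempty J›
    exact ⟨(V j)ᶜ, ⟨{j}, Finset.singleton_nonempty j, by simp⟩⟩
  have hI'dir : DirDown I' := by
    rintro _ ⟨t₁, ht₁, rfl⟩ _ ⟨t₂, ht₂, rfl⟩
    refine ⟨⋂ j ∈ t₁ ∪ t₂, (V j)ᶜ, ⟨t₁ ∪ t₂, ht₁.mono Finset.subset_union_left, rfl⟩, ?_⟩
    intro x hx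
    simp only [mem_iInter, Finset.mem_union, mem_inter_iff] at *
    exact ⟨fun j hj => hx j (Or.inl hj), fun j hj => hx j (Or.inr hj)⟩
  have hempty : ¬ (Y ∩ ⋂₀ I').Nonempty := by
    rintro ⟨x, hxY, hxI⟩
    obtain ⟨j, hj⟩ := mem_iUnion.mp (hsub hxY)
    have : x ∈ (V j)ᶜ := hxI _ ⟨{j}, Finset.singleton_nonempty j, by simp⟩
    exact this hj
  have := mt (hX.dir_inter Y hYclosed I' hI'K hI'ne hI'dir) hempty
  push_neg at this
  obtain ⟨W, ⟨t, ht, rfl⟩, hW⟩ := this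
  -- now Y ∩ ⋂_{j∈t} Vjᶜ = ∅, so W ⊆ ⋃ i (U i)ᶜ
  have hcover : (⋂ j ∈ t, (V j)ᶜ) ⊆ ⋃ i, (U i)ᶜ := by
    intro x hx
    by_contra hcon
    simp only [mem_iUnion, mem_compl_iff, not_exists, not_not] at hcon
    have hxmem : x ∈ Y ∩ ⋂ j ∈ t, (V j)ᶜ := ⟨mem_iInter.mpr hcon, hx⟩
    rw [hW] at hxmem
    exact hxmem
  obtain ⟨s, hs⟩ := (hX.compact _ (hfin t ht)).elim_finite_subcover
    (fun i => (U i)ᶜ) (fun i => (hKopen _ (hU i))) hcover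
  obtain ⟨i₀⟩ := ‹Nonempty I›
  refine ⟨insert i₀ s, t, Finset.insert_nonempty _ _, ht, ?_⟩
  intro x hx
  by_contra hxV
  simp only [mem_iUnion, not_exists] at hxV
  have hxW : x ∈ ⋂ j ∈ t, (V j)ᶜ := by
    simp only [mem_iInter, mem_compl_iff]
    exact fun j hj => hxV j hj
  obtain ⟨i, hi, hxi⟩ := mem_iUnion₂.mp (hs hxW)
  exact hxi (mem_iInter₂.mp hx i (Finset.mem_insert_of_mem hi))
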